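/- arXiv:2202.00140 — 2 statements merged into one kernel-verified Lean document; each statement's English description precedes it below -/
import Mathlib

section
/- Let d ≥ 2, N ≥ 2, δ > 0, and let m be an integer with 1 ≤ m ≤ N/2. Let t be a uniformly random subset of {1,…,N} of size m. Then for every string q ∈ 𝒜_d^N, the probability that |w(q_t) − w(q_{−t})| > δ is at most 2·exp(−δ²·m·N/(N+2)). -/
/-- Restriction of a string to the coordinates indexed by a subset `t`. -/
def restrictTo {N : ℕ} {α : Type*} (t : Finset (Fin N)) (x : Fin N → α) :
    {i : Fin N // i ∈ t} → α := fun i => x i.1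

/-- Relative Hamming weight `w(x) = |{i : x_i ≠ 0}| / |ι|`. -/
noncomputable def relWeight {d : ℕ} {ι : Type*} [Fintype ι] (x : ι → ZMod d) : ℝ :=
  ((Finset.univ.filter fun i => x i ≠ 0).card : ℝ) / (Fintype.card ι)

open Real Finset

/-- Hoeffding's lemma, two point version. -/
lemma hoeffding_two_point (p t : ℝ) (hp0 : 0 ≤ p) (hp1 : p ≤ 1) :
    p * exp ((1-p) * t) + (1-p) * exp (-(p * t)) ≤ exp (t^2/8) := by
  set g : ℝ → ℝ := fun s => 1 - p + p * exp s with hg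
  have hgpos : ∀ s, 0 < g s := by
    intro s
    show (0:ℝ) < 1 - p + p * exp s
    nlinarith [exp_pos s, mul_nonneg hp0 (exp_pos s).le]
  set L : ℝ → ℝ := fun s => log (g s) - p * s with hL
  have key : ∀ s, L s ≤ s^2/8 := by
    set φ : ℝ → ℝ := fun s => p * exp s / g s with hφ
    have hgd : ∀ s, HasDerivAt g (p * exp s) s := by
      intro s
      exact ((hasDerivAt_exp s).const_mul p).const_add (1-p)
    have hLd : ∀ s, HasDerivAt L (φ s - p) s := by
      intro s
      have h1 : HasDerivAt (fun s : ℝ => p * s) p s := by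
        simpa using (hasDerivAt_id s).const_mul p
      exact ((hgd s).log (hgpos s).ne').sub h1
    have hφ01 : ∀ s, 0 ≤ φ s ∧ φ s ≤ 1 := by
      intro s
      constructor
      · exact div_nonneg (mul_nonneg hp0 (exp_pos s).le) (hgpos s).le
      · rw [div_le_one (hgpos s)]
        show p * exp s ≤ 1 - p + p * exp s
        linarith
    have hφd : ∀ s, HasDerivAt (fun s => φ s - p) (φ s * (1 - φ s)) s := by
      intro s
      have h1 : HasDerivAt (fun s => p * exp s) (p * exp s) s := (hasDerivAt_exp s).const_mul p
      have h2 := (h1.div (hgd s) (hgpos s).ne')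
      have h3 : (p * exp s * g s - p * exp s * (p * exp s)) / (g s)^2 = φ s * (1 - φ s) := by
        have hne : g s ≠ 0 := (hgpos s).ne'
        rw [hφ]
        field_simp
      simpa [h3] using h2.sub_const p
    have hL' : ∀ s : ℝ, |φ s - p| ≤ |s| / 4 := by
      intro s
      have key2 := Convex.norm_image_sub_le_of_norm_hasDerivWithin_le
        (f := fun s => φ s - p) (f' := fun s => φ s * (1 - φ s)) (s := Set.univ) (C := 1/4)
        (fun x _ => (hφd x).hasDerivWithinAt)
        (fun x _ => by
          rw [Real.norm_eq_abs, abs_of_nonneg (mul_nonneg (hφ01 x).1 (by linarith [(hφ01 x).2]))]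
          nlinarith [sq_nonneg (2 * φ x - 1), (hφ01 x).1, (hφ01 x).2])
        convex_univ (Set.mem_univ 0) (Set.mem_univ s)
      have h0 : φ 0 = p := by
        rw [hφ]
        show p * exp 0 / (1 - p + p * exp 0) = p
        simp
      simp only [Real.norm_eq_abs, sub_zero, h0, sub_self] at key2
      linarith [key2]
    intro s
    set E : ℝ → ℝ := fun u => u^2/8 - L u with hE
    have hEd : ∀ u, HasDerivAt E (u/4 - (φ u - p)) u := by
      intro u
      have h1 : HasDerivAt (fun u : ℝ => u^2/8) (u/4) u := by
        have := (hasDerivAt_pow 2 u).div_const 8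
        exact this.congr_deriv (by norm_num; ring)
      exact h1.sub (hLd u)
    have hE0 : E 0 = 0 := by
      show (0:ℝ)^2/8 - (log (1 - p + p * exp 0) - p * 0) = 0
      simp
    rcases le_or_gt 0 s with hs | hs
    · have hmono : MonotoneOn E (Set.Icc 0 s) := by
        apply monotoneOn_of_deriv_nonneg (convex_Icc 0 s)
          (fun u _ => ((hEd u).continuousAt).continuousWithinAt)
          (fun u _ => ((hEd u).differentiableAt).differentiableWithinAt)
        intro u hu
        rw [(hEd u).deriv]
        rw [interior_Icc] at hu
        have h4 := hL' u
        rw [abs_of_nonneg (le_of_lt hu.1)] at h4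
        have := (abs_le.1 h4).2
        linarith
      have := hmono (Set.left_mem_Icc.2 hs) (Set.right_mem_Icc.2 hs) hs
      rw [hE0] at this
      have : 0 ≤ s^2/8 - L s := this
      linarith
    · have hanti : AntitoneOn E (Set.Icc s 0) := by
        apply antitoneOn_of_deriv_nonpos (convex_Icc s 0)
          (fun u _ => ((hEd u).continuousAt).continuousWithinAt)
          (fun u _ => ((hEd u).differentiableAt).differentiableWithinAt)
        intro u hu
        rw [(hEd u).deriv]
        rw [interior_Icc] at hu
        have h4 := hL' u
        rw [abs_of_nonpos (le_of_lt hu.2)] at h4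
        have := (abs_le.1 h4).1
        linarith
      have := hanti (Set.left_mem_Icc.2 hs.le) (Set.right_mem_Icc.2 hs.le) hs.le
      rw [hE0] at this
      have : 0 ≤ s^2/8 - L s := this
      linarith
  have hexp : p * exp ((1-p) * t) + (1-p) * exp (-(p * t)) = exp (L t) := by
    rw [hL]
    simp only
    rw [exp_sub, exp_log (hgpos t)]
    have h1 : (1-p) * t = t - p * t := by ring
    rw [h1, exp_sub]
    have hc : exp (-(p*t)) * exp (p*t) = 1 := by rw [← Real.exp_add]; simp
    have hptpos := exp_pos (p * t)
    field_simp [hg]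
    linear_combination (1 - p) * hc
  rw [hexp]
  exact exp_le_exp.2 (key t)

lemma succ_mul_choose' (n k : ℕ) : (k+1) * n.choose (k+1) = n * (n-1).choose k := by
  cases n with
  | zero => simp
  | succ n => rw [Nat.succ_sub_one, mul_comm, ← Nat.add_one_mul_choose_eq]

/-- mgf-type sum for the hypergeometric distribution, normalized to scale `N - m`. -/
noncomputable def Phi (N K m : ℕ) (lam : ℝ) : ℝ :=
  (∑ x ∈ Finset.range (m+1), ((K.choose x * (N-K).choose (m-x) : ℕ) : ℝ)
    * Real.exp (lam * ((x:ℝ) * N - (m:ℝ) * K) / ((N:ℝ) * ((N:ℝ) - m)))) / (N.choose m : ℝ)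

noncomputable def Vsum (N m : ℕ) : ℝ := ∑ k ∈ Finset.range m, 1 / ((N:ℝ) - 1 - k)^2

lemma Phi_le (m : ℕ) : ∀ (N K : ℕ) (lam : ℝ), m < N → K ≤ N →
    Phi N K m lam ≤ Real.exp (lam^2/8 * Vsum N m) := by
  induction m with
  | zero =>
      intro N K lam hmN hK
      simp [Phi, Vsum]
  | succ m ih =>
      intro N K lam hmN hK
      have hN2 : 2 ≤ N := by omega
      have hNR : (0:ℝ) < N := by positivity
      have hN1R : (0:ℝ) < (N:ℝ) - 1 := by
        have : (2:ℝ) ≤ N := by exact_mod_cast hN2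
        linarith
      have hNmR : (0:ℝ) < (N:ℝ) - (m+1) := by
        have : ((m:ℝ)+2) ≤ N := by exact_mod_cast hmN
        linarith
      have hKR : (K:ℝ) ≤ N := by exact_mod_cast hK
      have hchoose_pos : 0 < (N.choose (m+1) : ℝ) := by
        have := Nat.choose_pos (le_of_lt hmN)
        positivity
      have hchoose1_pos : 0 < ((N-1).choose m : ℝ) := by
        have : m ≤ N - 1 := by omega
        have := Nat.choose_pos this
        positivity
      set f : ℕ → ℝ := fun x =>
        Real.exp (lam * ((x:ℝ) * N - ((m:ℝ)+1) * K) / ((N:ℝ) * ((N:ℝ) - ((m:ℝ)+1)))) with hf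
      set S : ℝ := ∑ x ∈ range (m+2), ((K.choose x * (N-K).choose (m+1-x) : ℕ) : ℝ) * f x with hS
      set A : ℝ := ∑ y ∈ range (m+1), (((K-1).choose y * (N-K).choose (m-y) : ℕ) : ℝ) * f (y+1) with hA
      set B : ℝ := ∑ y ∈ range (m+1), ((K.choose y * (N-K-1).choose (m-y) : ℕ) : ℝ) * f y with hB
      have hPhi : Phi N K (m+1) lam = S / (N.choose (m+1) : ℝ) := by
        rw [Phi, hS]
        congr 1
        apply Finset.sum_congr rfl
        intro x _
        simp only [hf]
        norm_cast
      -- key recursion identity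
      have key : ((m:ℝ)+1) * S = (K:ℝ) * A + ((N:ℝ)-K) * B := by
        rw [hS, hA, hB, Finset.mul_sum, Finset.mul_sum, Finset.mul_sum]
        have hsplit : ∀ x ∈ range (m+2),
            ((m:ℝ)+1) * (((K.choose x * (N-K).choose (m+1-x) : ℕ) : ℝ) * f x)
            = (x:ℝ) * ((K.choose x * (N-K).choose (m+1-x) : ℕ) : ℝ) * f x
              + (((m+1-x : ℕ)):ℝ) * ((K.choose x * (N-K).choose (m+1-x) : ℕ) : ℝ) * f x := by
          intro x hx
          have hx' : x ≤ m + 1 := by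
            simp only [Finset.mem_range] at hx; omega
          have hc : (((m+1-x : ℕ)):ℝ) = (m:ℝ) + 1 - x := by
            push_cast [hx']
            ring
          rw [hc]
          ring
        rw [Finset.sum_congr rfl hsplit, Finset.sum_add_distrib]
        congr 1
        · -- first sum : shift index
          rw [Finset.sum_range_succ']
          simp only [Nat.cast_zero, zero_mul]
          rw [add_zero]
          apply Finset.sum_congr rfl
          intro y _
          have h1 : m + 1 - (y+1) = m - y := by omega
          rw [h1]
          have h2 : (y+1) * (K.choose (y+1) * (N-K).choose (m-y))
              = K * ((K-1).choose y * (N-K).choose (m-y)) := by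
            rw [← mul_assoc, succ_mul_choose' K y, mul_assoc]
          have hnr := congrArg (fun n : ℕ => (n:ℝ)) h2
          push_cast at hnr ⊢
          linear_combination hnr * f (y+1)
        · -- second sum : drop top term
          rw [Finset.sum_range_succ]
          simp only [Nat.sub_self, Nat.cast_zero, zero_mul]
          rw [add_zero]
          apply Finset.sum_congr rfl
          intro y hy
          have hy' : y ≤ m := by simp only [Finset.mem_range] at hy; omega
          have h1 : m + 1 - y = (m - y) + 1 := by omega
          rw [h1]
          have h3 : ((m-y)+1) * (K.choose y * (N-K).choose ((m-y)+1))
              = (N-K) * (K.choose y * (N-K-1).choose (m-y)) := by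
            calc ((m-y)+1) * (K.choose y * (N-K).choose ((m-y)+1))
                = K.choose y * (((m-y)+1) * ((N-K).choose ((m-y)+1))) := by ring
              _ = K.choose y * ((N-K) * ((N-K-1).choose (m-y))) := by
                  rw [succ_mul_choose' (N-K) (m-y)]
              _ = (N-K) * (K.choose y * (N-K-1).choose (m-y)) := by ring
          have hnr := congrArg (fun n : ℕ => (n:ℝ)) h3
          push_cast [hK] at hnr ⊢
          linear_combination hnr * f y
      -- rewrite Phi using the recursion
      have hcc : ((m:ℝ)+1) * (N.choose (m+1) : ℝ) = (N:ℝ) * (((N-1).choose m : ℕ) : ℝ) := by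
        have := congrArg (fun n : ℕ => (n:ℝ)) (succ_mul_choose' N m)
        push_cast at this
        linarith
      have hrec : Phi N K (m+1) lam
          = (K:ℝ)/N * (A / ((N-1).choose m : ℝ)) + ((N:ℝ)-K)/N * (B / ((N-1).choose m : ℝ)) := by
        have h9 : S * ((N:ℝ) * (((N-1).choose m : ℕ) : ℝ))
            = ((K:ℝ) * A + ((N:ℝ)-K) * B) * (N.choose (m+1) : ℝ) := by
          linear_combination ((N.choose (m+1) : ℕ) : ℝ) * key - S * hcc
        rw [hPhi, div_eq_iff hchoose_pos.ne']
        field_simp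
        linear_combination h9
      set E : ℝ := Real.exp (lam^2/8 * Vsum (N-1) m) with hE
      set p : ℝ := (K:ℝ)/N with hp
      set t : ℝ := lam / ((N:ℝ)-1) with ht
      have hp0 : 0 ≤ p := by positivity
      have hp1 : p ≤ 1 := by rw [hp, div_le_one hNR]; exact hKR
      have hcast1 : ((N-1 : ℕ):ℝ) = (N:ℝ) - 1 := by
        rw [Nat.cast_sub (by omega : 1 ≤ N), Nat.cast_one]
      have hNm1ne : ((N:ℝ) - 1 - (m:ℝ)) ≠ 0 := by
        intro h
        apply hNmR.ne'
        linarith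
      have hEpos : 0 < E := Real.exp_pos _
      -- branch A
      have hAle : p * (A / (((N-1).choose m : ℕ) : ℝ)) ≤ p * (exp ((1-p)*t) * E) := by
        rcases Nat.eq_zero_or_pos K with h0 | hKpos
        · simp [hp, h0]
        · apply mul_le_mul_of_nonneg_left _ hp0
          have hAeq : A / (((N-1).choose m : ℕ) : ℝ) = exp ((1-p)*t) * Phi (N-1) (K-1) m lam := by
            rw [Phi, hA, ← mul_div_assoc]
            congr 1
            rw [Finset.mul_sum]
            apply Finset.sum_congr rfl
            intro y _
            have e1 : (N-1)-(K-1) = N - K := by omega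
            rw [e1]
            have hfe : f (y+1) = exp ((1-p)*t)
                * exp (lam * ((y:ℝ) * (((N-1):ℕ):ℝ) - (m:ℝ) * (((K-1):ℕ):ℝ))
                    / ((((N-1):ℕ):ℝ) * ((((N-1):ℕ):ℝ) - (m:ℝ)))) := by
              rw [hf]
              simp only []
              rw [← Real.exp_add]
              congr 1
              rw [hcast1, Nat.cast_sub (show (1:ℕ) ≤ K from hKpos), Nat.cast_one]
              push_cast
              rw [hp, ht]
              field_simp
              ring
            rw [hfe]
            ring
          rw [hAeq]
          apply mul_le_mul_of_nonneg_left _ (Real.exp_pos _).le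
          exact ih (N-1) (K-1) lam (by omega) (by omega)
      -- branch B
      have hBle : (1-p) * (B / (((N-1).choose m : ℕ) : ℝ)) ≤ (1-p) * (exp (-(p*t)) * E) := by
        rcases eq_or_lt_of_le hK with h0 | hKlt
        · have : p = 1 := by rw [hp, h0]; field_simp
          simp [this]
        · have h1p : 0 ≤ 1 - p := by linarith
          apply mul_le_mul_of_nonneg_left _ h1p
          have hBeq : B / (((N-1).choose m : ℕ) : ℝ) = exp (-(p*t)) * Phi (N-1) K m lam := by
            rw [Phi, hB, ← mul_div_assoc]
            congr 1
            rw [Finset.mul_sum]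
            apply Finset.sum_congr rfl
            intro y _
            have e1 : (N-1)-K = N - K - 1 := by omega
            rw [e1]
            have hfe : f y = exp (-(p*t))
                * exp (lam * ((y:ℝ) * (((N-1):ℕ):ℝ) - (m:ℝ) * (K:ℝ))
                    / ((((N-1):ℕ):ℝ) * ((((N-1):ℕ):ℝ) - (m:ℝ)))) := by
              rw [hf]
              simp only []
              rw [← Real.exp_add]
              congr 1
              rw [hcast1]
              rw [hp, ht]
              field_simp
              ring
            rw [hfe]
            ring
          rw [hBeq]
          apply mul_le_mul_of_nonneg_left _ (Real.exp_pos _).le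
          exact ih (N-1) K lam (by omega) (by omega)
      -- combine
      have hq : ((N:ℝ)-K)/N = 1 - p := by rw [hp]; field_simp
      have hcomb : Phi N K (m+1) lam ≤ (p * exp ((1-p)*t) + (1-p) * exp (-(p*t))) * E := by
        rw [hrec, hq]
        calc p * (A / (((N-1).choose m : ℕ) : ℝ)) + (1-p) * (B / (((N-1).choose m : ℕ) : ℝ))
            ≤ p * (exp ((1-p)*t) * E) + (1-p) * (exp (-(p*t)) * E) := add_le_add hAle hBle
          _ = (p * exp ((1-p)*t) + (1-p) * exp (-(p*t))) * E := by ring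
      have hhoeff := hoeffding_two_point p t hp0 hp1
      have hVs : Vsum N (m+1) = 1/((N:ℝ)-1)^2 + Vsum (N-1) m := by
        rw [Vsum, Vsum, Finset.sum_range_succ']
        simp only [Nat.cast_zero, sub_zero, Nat.cast_add, Nat.cast_one, hcast1]
        rw [add_comm]
        congr 1
        apply Finset.sum_congr rfl
        intro k _
        congr 1
        ring
      calc Phi N K (m+1) lam ≤ (p * exp ((1-p)*t) + (1-p) * exp (-(p*t))) * E := hcomb
        _ ≤ exp (t^2/8) * E := by
            apply mul_le_mul_of_nonneg_right hhoeff hEpos.le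
        _ = Real.exp (lam^2/8 * Vsum N (m+1)) := by
            rw [hE, ← Real.exp_add]
            congr 1
            rw [hVs, ht]
            field_simp

lemma Vsum_le (N m : ℕ) (hm : 1 ≤ m) (hm2 : 2*m ≤ N) : Vsum N m ≤ 2*m*((N:ℝ)+2)/N^3 := by
  have hmN : (m:ℝ) ≤ (N:ℝ)/2 := by
    have : (2*m : ℝ) ≤ N := by exact_mod_cast hm2
    linarith
  have hm1 : (1:ℝ) ≤ m := by exact_mod_cast hm
  have hN2 : (2:ℝ) ≤ N := by
    have : (2:ℕ) ≤ N := by omega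
    exact_mod_cast this
  rcases le_or_gt 5 N with hN5 | hN4
  · have hN5R : (5:ℝ) ≤ N := by exact_mod_cast hN5
    set g : ℕ → ℝ := fun k => 1 / ((N:ℝ) - k - 1/2) with hg
    have h1 : Vsum N m ≤ ∑ k ∈ range m, (g (k+1) - g k) := by
      apply Finset.sum_le_sum
      intro k hk
      have hk' : (k:ℝ) ≤ m - 1 := by
        have : k + 1 ≤ m := Finset.mem_range.1 hk
        have : ((k:ℝ)+1) ≤ m := by exact_mod_cast this
        linarith
      have hd : (1:ℝ) ≤ (N:ℝ) - 1 - k := by linarith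
      have hd2 : (0:ℝ) < (N:ℝ) - 1 - k - 1/2 := by linarith
      have hgg : g (k+1) - g k = 1 / (((N:ℝ)-1-k)^2 - 1/4) := by
        rw [hg]
        push_cast
        rw [div_sub_div _ _ (by nlinarith) (by nlinarith)]
        rw [div_eq_div_iff (by nlinarith) (by nlinarith)]
        ring
      rw [hgg]
      apply one_div_le_one_div_of_le
      · nlinarith
      · nlinarith
    rw [Finset.sum_range_sub g] at h1
    have h2 : g m - g 0 = (m:ℝ) / (((N:ℝ) - m - 1/2) * ((N:ℝ) - 1/2)) := by
      rw [hg]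
      simp only [Nat.cast_zero]
      rw [div_sub_div _ _ (by nlinarith) (by nlinarith)]
      rw [div_eq_div_iff (by nlinarith) (by nlinarith)]
      ring
    rw [h2] at h1
    refine le_trans h1 ?_
    rw [div_le_div_iff₀ (by nlinarith) (by positivity)]
    have ha : (0:ℝ) ≤ (N:ℝ) - 2*m := by linarith
    nlinarith [mul_nonneg ha (mul_nonneg (by linarith : (0:ℝ) ≤ (N:ℝ)-1/2) (by linarith : (0:ℝ) ≤ (N:ℝ)+2)),
      mul_nonneg (by linarith : (0:ℝ) ≤ (N:ℝ)-5) (by linarith : (0:ℝ) ≤ (N:ℝ)),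
      mul_nonneg (mul_nonneg (by linarith : (0:ℝ) ≤ (m:ℝ)) (by linarith : (0:ℝ) ≤ (N:ℝ)-2*m)) (by linarith : (0:ℝ) ≤ (N:ℝ))]
  · have hm2' : m ≤ 2 := by omega
    have hN : N ≤ 4 := by omega
    have hN' : 2 ≤ N := by omega
    interval_cases N <;> interval_cases m <;>
      first
      | omega
      | norm_num [Vsum, Finset.sum_range_succ]

lemma tail_le (N K m : ℕ) (δ : ℝ) (hδ : 0 < δ) (hm : 1 ≤ m) (hm2 : 2*m ≤ N) (hK : K ≤ N) :
    (∑ x ∈ Finset.range (m+1),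
        if δ * m * ((N:ℝ)-m) < |(x:ℝ)*N - (m:ℝ)*K| then ((K.choose x * (N-K).choose (m-x) : ℕ):ℝ) else 0)
      / (N.choose m : ℝ)
    ≤ 2 * Real.exp (-(δ^2) * m * N / (N+2)) := by
  classical
  have hmN : m < N := by omega
  have hNR : (0:ℝ) < N := by
    have : (0:ℕ) < N := by omega
    exact_mod_cast this
  have hmR : (0:ℝ) < m := by exact_mod_cast hm
  have hNmR : (0:ℝ) < (N:ℝ) - m := by
    have : (m:ℝ) < N := by exact_mod_cast hmN
    linarith
  have hCpos : (0:ℝ) < (N.choose m : ℝ) := by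
    have := Nat.choose_pos (le_of_lt hmN)
    positivity
  have hV0 : 0 < Vsum N m := by
    rw [Vsum]
    apply Finset.sum_pos
    · intro k hk
      have hkm : k < m := Finset.mem_range.1 hk
      have : (k:ℝ) + 1 ≤ m := by exact_mod_cast hkm
      have h2 : (0:ℝ) < (N:ℝ) - 1 - k := by
        have : (m:ℝ) < N := by exact_mod_cast hmN
        linarith
      exact div_pos one_pos (pow_pos h2 2)
    · exact ⟨0, Finset.mem_range.2 hm⟩
  set V : ℝ := Vsum N m with hVdef
  set a : ℝ := δ * m / N with ha
  have ha0 : 0 < a := by positivity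
  set lam : ℝ := 4 * a / V with hlam
  have hlam0 : 0 < lam := by positivity
  set w : ℕ → ℝ := fun x => ((K.choose x * (N-K).choose (m-x) : ℕ):ℝ) with hw
  have hw0 : ∀ x, 0 ≤ w x := fun x => Nat.cast_nonneg _
  have hstep : ∀ x ∈ Finset.range (m+1),
      (if δ * m * ((N:ℝ)-m) < |(x:ℝ)*N - (m:ℝ)*K| then w x else 0)
      ≤ exp (-(lam*a)) * (w x * exp (lam * ((x:ℝ)*N - (m:ℝ)*K) / ((N:ℝ)*((N:ℝ)-m))))
        + exp (-(lam*a)) * (w x * exp ((-lam) * ((x:ℝ)*N - (m:ℝ)*K) / ((N:ℝ)*((N:ℝ)-m)))) := by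
    intro x _
    by_cases hc : δ * m * ((N:ℝ)-m) < |(x:ℝ)*N - (m:ℝ)*K|
    · rw [if_pos hc]
      rcases lt_abs.1 hc with h | h
      · -- upper tail : exp(-(lam a)) * exp (lam c) ≥ 1
        have h1 : a ≤ ((x:ℝ)*N - (m:ℝ)*K) / ((N:ℝ)*((N:ℝ)-m)) := by
          rw [ha, le_div_iff₀ (by positivity)]
          calc δ * m / N * ((N:ℝ)*((N:ℝ)-m)) = δ * m * ((N:ℝ)-m) := by field_simp
            _ ≤ (x:ℝ)*N - (m:ℝ)*K := h.le
        have h2 : (1:ℝ) ≤ exp (-(lam*a)) * exp (lam * ((x:ℝ)*N - (m:ℝ)*K) / ((N:ℝ)*((N:ℝ)-m))) := by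
          rw [← Real.exp_add]
          rw [show -(lam*a) + lam * ((x:ℝ)*N - (m:ℝ)*K) / ((N:ℝ)*((N:ℝ)-m))
              = lam * (((x:ℝ)*N - (m:ℝ)*K) / ((N:ℝ)*((N:ℝ)-m)) - a) from by ring]
          apply Real.one_le_exp
          apply mul_nonneg hlam0.le
          linarith
        have h3 : w x ≤ exp (-(lam*a)) * (w x * exp (lam * ((x:ℝ)*N - (m:ℝ)*K) / ((N:ℝ)*((N:ℝ)-m)))) := by
          calc w x = w x * 1 := by ring
            _ ≤ w x * (exp (-(lam*a)) * exp (lam * ((x:ℝ)*N - (m:ℝ)*K) / ((N:ℝ)*((N:ℝ)-m)))) :=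
                mul_le_mul_of_nonneg_left h2 (hw0 x)
            _ = exp (-(lam*a)) * (w x * exp (lam * ((x:ℝ)*N - (m:ℝ)*K) / ((N:ℝ)*((N:ℝ)-m)))) := by ring
        have h4 : (0:ℝ) ≤ exp (-(lam*a)) * (w x * exp ((-lam) * ((x:ℝ)*N - (m:ℝ)*K) / ((N:ℝ)*((N:ℝ)-m)))) := by
          have := hw0 x
          positivity
        linarith
      · -- lower tail
        have h1 : ((x:ℝ)*N - (m:ℝ)*K) / ((N:ℝ)*((N:ℝ)-m)) ≤ -a := by
          rw [ha, le_neg, ← neg_div, le_div_iff₀ (by positivity)]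
          calc δ * m / N * ((N:ℝ)*((N:ℝ)-m)) = δ * m * ((N:ℝ)-m) := by field_simp
            _ ≤ -((x:ℝ)*N - (m:ℝ)*K) := h.le
        have h2 : (1:ℝ) ≤ exp (-(lam*a)) * exp ((-lam) * ((x:ℝ)*N - (m:ℝ)*K) / ((N:ℝ)*((N:ℝ)-m))) := by
          rw [← Real.exp_add]
          rw [show -(lam*a) + (-lam) * ((x:ℝ)*N - (m:ℝ)*K) / ((N:ℝ)*((N:ℝ)-m))
              = lam * (-(((x:ℝ)*N - (m:ℝ)*K) / ((N:ℝ)*((N:ℝ)-m))) - a) from by ring]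
          apply Real.one_le_exp
          apply mul_nonneg hlam0.le
          linarith
        have h3 : w x ≤ exp (-(lam*a)) * (w x * exp ((-lam) * ((x:ℝ)*N - (m:ℝ)*K) / ((N:ℝ)*((N:ℝ)-m)))) := by
          calc w x = w x * 1 := by ring
            _ ≤ w x * (exp (-(lam*a)) * exp ((-lam) * ((x:ℝ)*N - (m:ℝ)*K) / ((N:ℝ)*((N:ℝ)-m)))) :=
                mul_le_mul_of_nonneg_left h2 (hw0 x)
            _ = exp (-(lam*a)) * (w x * exp ((-lam) * ((x:ℝ)*N - (m:ℝ)*K) / ((N:ℝ)*((N:ℝ)-m)))) := by ring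
        have h4 : (0:ℝ) ≤ exp (-(lam*a)) * (w x * exp (lam * ((x:ℝ)*N - (m:ℝ)*K) / ((N:ℝ)*((N:ℝ)-m)))) := by
          have := hw0 x
          positivity
        linarith
    · rw [if_neg hc]
      have h4 := hw0 x
      positivity
  have hsum := Finset.sum_le_sum hstep
  have hdiv : (∑ x ∈ Finset.range (m+1),
      if δ * m * ((N:ℝ)-m) < |(x:ℝ)*N - (m:ℝ)*K| then w x else 0) / (N.choose m : ℝ)
      ≤ exp (-(lam*a)) * Phi N K m lam + exp (-(lam*a)) * Phi N K m (-lam) := by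
    rw [div_le_iff₀ hCpos]
    calc (∑ x ∈ Finset.range (m+1), if δ * m * ((N:ℝ)-m) < |(x:ℝ)*N - (m:ℝ)*K| then w x else 0)
        ≤ ∑ x ∈ Finset.range (m+1),
            (exp (-(lam*a)) * (w x * exp (lam * ((x:ℝ)*N - (m:ℝ)*K) / ((N:ℝ)*((N:ℝ)-m))))
            + exp (-(lam*a)) * (w x * exp ((-lam) * ((x:ℝ)*N - (m:ℝ)*K) / ((N:ℝ)*((N:ℝ)-m))))) := hsum
      _ = (exp (-(lam*a)) * Phi N K m lam + exp (-(lam*a)) * Phi N K m (-lam)) * (N.choose m : ℝ) := by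
          simp only [hw]
          rw [Finset.sum_add_distrib, ← Finset.mul_sum, ← Finset.mul_sum, Phi, Phi, add_mul,
              mul_assoc, mul_assoc, div_mul_cancel₀ _ hCpos.ne', div_mul_cancel₀ _ hCpos.ne']
  have hP1 := Phi_le m N K lam hmN hK
  have hP2 := Phi_le m N K (-lam) hmN hK
  rw [show (-lam)^2 = lam^2 from by ring] at hP2
  have hmain : (∑ x ∈ Finset.range (m+1),
      if δ * m * ((N:ℝ)-m) < |(x:ℝ)*N - (m:ℝ)*K| then w x else 0) / (N.choose m : ℝ)
      ≤ 2 * exp (lam^2/8 * V - lam * a) := by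
    refine le_trans hdiv ?_
    have e1 : exp (-(lam*a)) * Phi N K m lam ≤ exp (-(lam*a)) * exp (lam^2/8 * V) :=
      mul_le_mul_of_nonneg_left hP1 (exp_pos _).le
    have e2 : exp (-(lam*a)) * Phi N K m (-lam) ≤ exp (-(lam*a)) * exp (lam^2/8 * V) :=
      mul_le_mul_of_nonneg_left hP2 (exp_pos _).le
    have e3 : exp (-(lam*a)) * exp (lam^2/8 * V) = exp (lam^2/8 * V - lam * a) := by
      rw [← Real.exp_add]; ring_nf
    linarith [e1, e2, e3]
  refine le_trans hmain ?_
  have hexp : lam^2/8 * V - lam * a ≤ -(δ^2) * m * N / (N+2) := by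
    have h1 : lam^2/8 * V - lam * a = -(2 * a^2 / V) := by
      rw [hlam]
      field_simp
      ring
    rw [h1]
    have hVle : V ≤ 2*m*((N:ℝ)+2)/N^3 := Vsum_le N m hm hm2
    have h2 : δ^2 * m * N / (N+2) ≤ 2 * a^2 / V := by
      rw [div_le_div_iff₀ (by positivity) hV0]
      calc δ^2 * m * N * V ≤ δ^2 * m * N * (2*m*((N:ℝ)+2)/N^3) := by
            apply mul_le_mul_of_nonneg_left hVle (by positivity)
        _ = 2 * a^2 * ((N:ℝ)+2) := by rw [ha]; field_simp
    rw [show -(δ^2) * (m:ℝ) * N / (N+2) = -(δ^2*m*N/(N+2)) from by ring]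
    linarith [h2]
  have := Real.exp_le_exp.2 hexp
  linarith [this]

lemma relWeight_restrict {d N : ℕ} (q : Fin N → ZMod d) (t : Finset (Fin N)) :
    relWeight (restrictTo t q) = ((t.filter fun i => q i ≠ 0).card : ℝ) / t.card := by
  rw [relWeight, Fintype.card_coe]
  congr 2
  rw [Finset.univ_eq_attach]
  simp only [restrictTo]
  exact Finset.card_bij (fun a _ => a.1)
    (fun a h => Finset.mem_filter.2 ⟨a.2, (Finset.mem_filter.1 h).2⟩) (by simp)
    (fun b h => ⟨⟨b, (Finset.mem_filter.1 h).1⟩, Finset.mem_filter.2 ⟨Finset.mem_attach _ _, (Finset.mem_filter.1 h).2⟩, rfl⟩)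

lemma count_inter {N : ℕ} (S : Finset (Fin N)) (m x : ℕ) (hx : x ≤ m) :
    (Finset.univ.filter fun t : Finset (Fin N) =>
        t.card = m ∧ (t ∩ S).card = x).card = S.card.choose x * Sᶜ.card.choose (m-x) := by
  classical
  rw [← Finset.card_powersetCard, ← Finset.card_powersetCard, ← Finset.card_product]
  apply Finset.card_bij' (fun t _ => (t ∩ S, t \ S)) (fun pr _ => pr.1 ∪ pr.2)
  · intro t ht
    simp only [Finset.mem_filter, Finset.mem_univ, true_and] at ht
    simp only [Finset.mem_product, Finset.mem_powersetCard]
    refine ⟨⟨Finset.inter_subset_right, ht.2⟩, ?_, ?_⟩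
    · intro i hi
      simp only [Finset.mem_sdiff] at hi
      simp [hi.2]
    · have hsplit : (t ∩ S).card + (t \ S).card = t.card :=
        Finset.card_inter_add_card_sdiff t S
      omega
  · rintro ⟨A, B⟩ hpr
    simp only [Finset.mem_product, Finset.mem_powersetCard] at hpr
    obtain ⟨⟨h1s, h1c⟩, h2s, h2c⟩ := hpr
    simp only [Finset.mem_filter, Finset.mem_univ, true_and]
    have hdisj : Disjoint A B := by
      apply Finset.disjoint_left.2
      intro i hi1 hi2
      have h2 := h2s hi2
      simp only [Finset.mem_compl] at h2
      exact h2 (h1s hi1)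
    constructor
    · rw [Finset.card_union_of_disjoint hdisj, h1c, h2c]
      omega
    · have e1 : (A ∪ B) ∩ S = A := by
        ext i
        simp only [Finset.mem_inter, Finset.mem_union]
        constructor
        · rintro ⟨h | h, hs⟩
          · exact h
          · have h2 := h2s h
            simp only [Finset.mem_compl] at h2
            exact absurd hs h2
        · intro h
          exact ⟨Or.inl h, h1s h⟩
      rw [e1, h1c]
  · intro t _
    ext i
    simp only [Finset.mem_union, Finset.mem_inter, Finset.mem_sdiff]
    tauto
  · rintro ⟨A, B⟩ hpr
    simp only [Finset.mem_product, Finset.mem_powersetCard] at hpr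
    obtain ⟨⟨h1s, h1c⟩, h2s, h2c⟩ := hpr
    simp only [Prod.mk.injEq]
    constructor
    · ext i
      simp only [Finset.mem_inter, Finset.mem_union]
      constructor
      · rintro ⟨h | h, hs⟩
        · exact h
        · have h2 := h2s h
          simp only [Finset.mem_compl] at h2
          exact absurd hs h2
      · intro h
        exact ⟨Or.inl h, h1s h⟩
    · ext i
      simp only [Finset.mem_sdiff, Finset.mem_union]
      constructor
      · rintro ⟨h | h, hns⟩
        · exact absurd (h1s h) hns
        · exact h
      · intro h
        have h2 := h2s h
        simp only [Finset.mem_compl] at h2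
        exact ⟨Or.inr h, h2⟩

/-- **Classical sampling bound (single string).**
Let `d ≥ 2`, `N ≥ 2`, `δ > 0`, `1 ≤ m ≤ N/2`.  If a subset `t ⊆ {1,…,N}` of size `m` is
chosen uniformly at random, then for every `q ∈ 𝒜_d^N`, the probability that
`|w(q_t) - w(q_{-t})| > δ` is at most `2·exp(-δ²·m·N/(N+2))`. -/
theorem sampling_bound_single (d N m : ℕ) (hd : 2 ≤ d) (hN : 2 ≤ N)
    (hm : 1 ≤ m) (hm2 : 2 * m ≤ N) (δ : ℝ) (hδ : 0 < δ) (q : Fin N → ZMod d) :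
    (Nat.card {t : Finset (Fin N) //
        t.card = m ∧ δ < |relWeight (restrictTo t q) - relWeight (restrictTo tᶜ q)|} : ℝ)
      / (N.choose m : ℝ)
      ≤ 2 * Real.exp (-(δ ^ 2) * m * N / (N + 2)) := by
  classical
  set S : Finset (Fin N) := Finset.univ.filter (fun i => q i ≠ 0) with hSdef
  set K : ℕ := S.card with hKdef
  have hKN : K ≤ N := by
    calc K ≤ Finset.univ.card := Finset.card_filter_le _ _
      _ = N := by simp
  have hmN : m < N := by omega
  have hNR : (0:ℝ) < N := by
    have : (0:ℕ) < N := by omega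
    exact_mod_cast this
  have hmR : (0:ℝ) < m := by exact_mod_cast hm
  have hNmR : (0:ℝ) < (N:ℝ) - m := by
    have : (m:ℝ) < N := by exact_mod_cast hmN
    linarith
  -- step 1: Nat.card to Finset count
  have h1 : (Nat.card {t : Finset (Fin N) //
      t.card = m ∧ δ < |relWeight (restrictTo t q) - relWeight (restrictTo tᶜ q)|} : ℕ)
      = (Finset.univ.filter fun t : Finset (Fin N) =>
          t.card = m ∧ δ < |relWeight (restrictTo t q) - relWeight (restrictTo tᶜ q)|).card := by
    rw [Nat.card_eq_fintype_card, Fintype.card_subtype]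
  -- step 2: rewrite the event
  have h2 : (Finset.univ.filter fun t : Finset (Fin N) =>
        t.card = m ∧ δ < |relWeight (restrictTo t q) - relWeight (restrictTo tᶜ q)|)
      = (Finset.univ.filter fun t : Finset (Fin N) =>
        t.card = m ∧ δ * m * ((N:ℝ)-m) < |((t ∩ S).card : ℝ)*N - (m:ℝ)*K|) := by
    apply Finset.filter_congr
    intro t _
    apply and_congr_right
    intro htm
    have htc : (tᶜ : Finset (Fin N)).card = N - m := by
      rw [Finset.card_compl, htm]
      simp
    have hxle : (t ∩ S).card + (tᶜ ∩ S).card = K := by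
      have h := Finset.card_inter_add_card_sdiff S t
      rw [sdiff_eq] at h
      rw [Finset.inter_comm t S, Finset.inter_comm tᶜ S]
      exact h
    have hw1 : relWeight (restrictTo t q) = (((t ∩ S).card : ℕ) : ℝ) / m := by
      rw [relWeight_restrict, htm]
      congr 3
      ext i
      simp [hSdef]
    have hw2 : relWeight (restrictTo tᶜ q) = ((K:ℝ) - (((t ∩ S).card : ℕ) : ℝ)) / ((N:ℝ) - m) := by
      rw [relWeight_restrict, htc]
      have hcast : (((tᶜ.filter fun i => q i ≠ 0).card : ℕ) : ℝ) = (K:ℝ) - (((t ∩ S).card : ℕ) : ℝ) := by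
        have he : (tᶜ.filter fun i => q i ≠ 0) = tᶜ ∩ S := by
          ext i
          simp [hSdef]
        rw [he]
        have hc := hxle
        have : ((t ∩ S).card : ℝ) + ((tᶜ ∩ S).card : ℝ) = (K : ℝ) := by exact_mod_cast hc
        linarith
      rw [hcast]
      congr 1
      rw [Nat.cast_sub hmN.le]
    rw [hw1, hw2]
    have harith : (((t ∩ S).card : ℕ) : ℝ)/m - ((K:ℝ) - (((t ∩ S).card : ℕ) : ℝ))/((N:ℝ)-m)
        = ((((t ∩ S).card : ℕ) : ℝ)*N - (m:ℝ)*K)/((m:ℝ)*((N:ℝ)-m)) := by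
      field_simp
      ring
    rw [harith, abs_div, abs_of_pos (by positivity : (0:ℝ) < (m:ℝ)*((N:ℝ)-m))]
    rw [lt_div_iff₀ (by positivity : (0:ℝ) < (m:ℝ)*((N:ℝ)-m))]
    rw [show δ*((m:ℝ)*((N:ℝ)-m)) = δ*m*((N:ℝ)-m) from by ring]
  -- step 3: fiberwise count
  have hcompl : Sᶜ.card = N - K := by
    rw [Finset.card_compl]
    simp [hKdef]
  have h3 : (Finset.univ.filter fun t : Finset (Fin N) =>
        t.card = m ∧ δ * m * ((N:ℝ)-m) < |((t ∩ S).card : ℝ)*N - (m:ℝ)*K|).card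
      = ∑ x ∈ Finset.range (m+1), if δ * m * ((N:ℝ)-m) < |(x:ℝ)*N - (m:ℝ)*K|
          then K.choose x * (N-K).choose (m-x) else 0 := by
    rw [Finset.card_eq_sum_card_fiberwise
      (f := fun t : Finset (Fin N) => (t ∩ S).card) (t := Finset.range (m+1))
      (by
        intro t ht
        simp only [Finset.mem_coe, Finset.mem_filter] at ht
        exact Finset.mem_range_succ_iff.2
          (le_trans (Finset.card_le_card Finset.inter_subset_left) ht.2.1.le))]
    apply Finset.sum_congr rfl
    intro x hx
    by_cases hE : δ * m * ((N:ℝ)-m) < |(x:ℝ)*N - (m:ℝ)*K|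
    · rw [if_pos hE]
      rw [show K.choose x * (N-K).choose (m-x) = S.card.choose x * Sᶜ.card.choose (m-x) from by
        rw [← hKdef, hcompl]]
      rw [← count_inter S m x (Finset.mem_range_succ_iff.1 hx)]
      congr 1
      ext t
      simp only [Finset.mem_filter, Finset.mem_univ, true_and]
      constructor
      · rintro ⟨⟨ha, _⟩, hc⟩
        exact ⟨ha, hc⟩
      · rintro ⟨ha, hc⟩
        refine ⟨⟨ha, ?_⟩, hc⟩
        rw [hc]
        exact hE
    · rw [if_neg hE, Finset.card_eq_zero, Finset.filter_eq_empty_iff]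
      intro t ht
      simp only [Finset.mem_filter, Finset.mem_univ, true_and] at ht
      intro hvx
      rw [hvx] at ht
      exact hE ht.2
  rw [h1, h2, h3]
  rw [Nat.cast_sum]
  have hcastsum : ∀ x ∈ Finset.range (m+1),
      ((if δ * m * ((N:ℝ)-m) < |(x:ℝ)*N - (m:ℝ)*K| then K.choose x * (N-K).choose (m-x) else 0 : ℕ) : ℝ)
      = (if δ * m * ((N:ℝ)-m) < |(x:ℝ)*N - (m:ℝ)*K| then ((K.choose x * (N-K).choose (m-x) : ℕ):ℝ) else 0) := by
    intro x _
    split <;> simp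
  rw [Finset.sum_congr rfl hcastsum]
  exact tail_le N K m δ hδ hm hm2 hKN
end

section
/- Let d ≥ 2, p ≥ 1, n ≥ 1, δ > 0, and fix ω ∈ [0,1] with ω + δ ≤ 1 − 1/d. Fix a tuple x = (x¹,…,x^p) of p strings in 𝒜_d^n and define J(ω : x) = { y ∈ 𝒜_d^n : |w(s(y,x¹,…,x^p)) − ω| ≤ δ }. Then |J(ω : x)| ≤ d^{n·H_d(ω + δ)}. -/
/-- The sum string `s(y, x¹,…,x^p)_i = y_i + x¹_i + ⋯ + x^p_i` in `ZMod d`. -/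
def sumWith {d p n : ℕ} (x : Fin p → Fin n → ZMod d) (y : Fin n → ZMod d) :
    Fin n → ZMod d := fun i => y i + ∑ j, x j i

/-- The `d`-ary entropy function
`H_d(x) = x·log_d(d−1) − x·log_d x − (1−x)·log_d(1−x)` (with the junk-value
convention `log 0 = 0`, this agrees with `H_d(0) = 0` and `H_d(1) = log_d(d−1)`). -/
noncomputable def Hd (d : ℕ) (x : ℝ) : ℝ :=
  x * Real.logb d (d - 1) - x * Real.logb d x - (1 - x) * Real.logb d (1 - x)

/-- **Entropy bound on `|J(ω : x)|`.**
For `d ≥ 2`, `p ≥ 1`, `n ≥ 1`, `δ > 0`, and `ω ∈ [0,1]` with `ω + δ ≤ 1 − 1/d`,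
and any fixed tuple `x = (x¹,…,x^p)` of strings in `𝒜_d^n`, the set
`J(ω : x) = { y ∈ 𝒜_d^n : |w(s(y,x¹,…,x^p)) − ω| ≤ δ }` satisfies
`|J(ω : x)| ≤ d^{n·H_d(ω+δ)}`. -/
theorem J_card_entropy_bound (d p n : ℕ) (hd : 2 ≤ d) (hp : 1 ≤ p) (hn : 1 ≤ n)
    (δ : ℝ) (hδ : 0 < δ) (ω : ℝ) (hω : ω ∈ Set.Icc (0 : ℝ) 1)
    (hωδ : ω + δ ≤ 1 - 1 / d) (x : Fin p → Fin n → ZMod d) :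
    (Nat.card {y : Fin n → ZMod d | |relWeight (sumWith x y) - ω| ≤ δ} : ℝ)
      ≤ (d : ℝ) ^ ((n : ℝ) * Hd d (ω + δ)) := by
  classical
  haveI : NeZero d := ⟨by omega⟩
  have hd1 : (1:ℝ) < d := by
    have : (2:ℝ) ≤ d := by exact_mod_cast hd
    linarith
  have hd0 : (0:ℝ) < d := by linarith
  have hdm1 : (0:ℝ) < (d:ℝ) - 1 := by linarith
  have hn0 : (0:ℝ) < n := by exact_mod_cast hn
  set r : ℝ := ω + δ with hrdef
  have hr0 : 0 < r := by have := hω.1; simp only [hrdef]; linarith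
  have hr1 : r < 1 := by
    have h1d : (0:ℝ) < 1/d := by positivity
    linarith [hωδ]
  have hb0 : (0:ℝ) < 1 - r := by linarith
  set a : ℝ := r / ((d:ℝ) - 1) with hadef
  have ha0 : 0 < a := by positivity
  have hab : a ≤ 1 - r := by
    rw [hadef, div_le_iff₀ hdm1]
    have h1 : r ≤ 1 - 1/(d:ℝ) := hωδ
    have h2 : r * (d:ℝ) ≤ (1 - 1/(d:ℝ)) * d := by
      exact mul_le_mul_of_nonneg_right h1 hd0.le
    have h3 : (1 - 1/(d:ℝ)) * d = (d:ℝ) - 1 := by field_simp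
    nlinarith
  -- weight function
  set wt : (Fin n → ZMod d) → ℕ := fun z => (Finset.univ.filter fun i => z i ≠ 0).card with hwt
  -- step 1: translate y ↦ y + c
  set c : Fin n → ZMod d := fun i => ∑ j, x j i with hcdef
  have hsum : ∀ y : Fin n → ZMod d, sumWith x y = y + c := fun y => rfl
  have hcard1 : Nat.card {y : Fin n → ZMod d | |relWeight (sumWith x y) - ω| ≤ δ}
      = Nat.card {z : Fin n → ZMod d | |relWeight z - ω| ≤ δ} := by
    apply Nat.card_congr
    exact Equiv.subtypeEquiv (Equiv.addRight c) (fun y => by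
      simp only [Set.mem_setOf_eq, hsum y, Equiv.coe_addRight])
  -- step 2: compare with the Hamming-ball finset
  set T : Finset (Fin n → ZMod d) :=
    Finset.univ.filter (fun z => (wt z : ℝ) ≤ r * n) with hTdef
  have hcard2 : Nat.card {z : Fin n → ZMod d | |relWeight z - ω| ≤ δ} ≤ T.card := by
    have hsub : {z : Fin n → ZMod d | |relWeight z - ω| ≤ δ} ⊆ (↑T : Set _) := by
      intro z hz
      simp only [Set.mem_setOf_eq] at hz
      have h2 := (abs_le.1 hz).2
      have hw : relWeight z ≤ r := by simp only [hrdef]; linarith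
      simp only [hTdef, Finset.coe_filter, Set.mem_setOf_eq, Finset.mem_univ, true_and]
      have : relWeight z = (wt z : ℝ) / n := by
        simp [relWeight, hwt, Fintype.card_fin]
      rw [this, div_le_iff₀ hn0] at hw
      linarith [hw]
    calc Nat.card {z : Fin n → ZMod d | |relWeight z - ω| ≤ δ}
        ≤ Nat.card (↑T : Set (Fin n → ZMod d)) := Nat.card_mono T.finite_toSet hsub
      _ = T.card := by rw [Nat.card_coe_set_eq, Set.ncard_coe_finset]
  -- the product weight μ
  set μ : (Fin n → ZMod d) → ℝ := fun z => ∏ i, (if z i = 0 then 1 - r else a) with hμ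
  have hμsum : ∑ z : Fin n → ZMod d, μ z = 1 := by
    have h1 : ∑ z : Fin n → ZMod d, μ z
        = ∏ _i : Fin n, ∑ t : ZMod d, (if t = 0 then 1 - r else a) := by
      rw [Fintype.prod_sum (fun (_ : Fin n) (t : ZMod d) => if t = 0 then 1 - r else a)]
    have hinner : ∑ t : ZMod d, (if t = 0 then 1 - r else a) = 1 := by
      rw [Finset.sum_ite, Finset.sum_const, Finset.sum_const]
      have hc1 : (Finset.univ.filter (fun t : ZMod d => t = 0)).card = 1 := by
        simp [Finset.filter_eq']
      have hc2 : (Finset.univ.filter (fun t : ZMod d => ¬ t = 0)).card = d - 1 := by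
        have h := Finset.card_filter_add_card_filter_not
          (s := (Finset.univ : Finset (ZMod d))) (p := fun t => t = 0)
        simp only [Finset.card_univ, ZMod.card] at h
        omega
      rw [hc1, hc2, nsmul_eq_mul, nsmul_eq_mul]
      have hcast : ((d - 1 : ℕ) : ℝ) = (d:ℝ) - 1 := by
        have h1 : (1:ℕ) ≤ d := by omega
        push_cast [h1]
        ring
      rw [hcast, hadef]
      field_simp
      norm_num
    rw [h1, hinner, Finset.prod_const, one_pow]
  have hμnonneg : ∀ z, 0 ≤ μ z := fun z =>
    Finset.prod_nonneg (fun i _ => by split <;> [linarith; linarith])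
  have hμeq : ∀ z : Fin n → ZMod d, μ z = (1 - r) ^ (n - wt z) * a ^ (wt z) := by
    intro z
    rw [hμ]
    simp only
    rw [Finset.prod_ite, Finset.prod_const, Finset.prod_const]
    congr 2
    · have h := Finset.card_filter_add_card_filter_not
        (s := (Finset.univ : Finset (Fin n))) (p := fun i => z i = 0)
      simp only [Finset.card_univ, Fintype.card_fin] at h
      have : wt z = (Finset.univ.filter (fun i => ¬ z i = 0)).card := rfl
      omega
  -- D, the lower bound on μ on T
  set D : ℝ := a ^ (r * (n:ℝ)) * (1 - r) ^ ((1 - r) * (n:ℝ)) with hDdef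
  have hwtle : ∀ z : Fin n → ZMod d, wt z ≤ n := fun z => by
    simpa [hwt] using Finset.card_filter_le Finset.univ (fun i => z i ≠ 0)
  have hge : ∀ z ∈ T, D ≤ μ z := by
    intro z hz
    have hk : (wt z : ℝ) ≤ r * n := by
      simp only [hTdef, Finset.mem_filter] at hz
      exact hz.2
    set k : ℕ := wt z with hkd
    have hkn : k ≤ n := hwtle z
    have hmk : ((n - k : ℕ) : ℝ) = (n:ℝ) - k := by
      push_cast [hkn]; ring
    rw [hμeq z, ← hkd]
    rw [← Real.rpow_natCast (1 - r) (n - k), ← Real.rpow_natCast a k, hmk]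
    have e1 : a ^ (r * (n:ℝ)) = a ^ (k:ℝ) * a ^ (r * n - k) := by
      rw [← Real.rpow_add ha0]; ring_nf
    have e2 : a ^ (r * (n:ℝ) - k) ≤ (1 - r) ^ (r * (n:ℝ) - k) :=
      Real.rpow_le_rpow ha0.le hab (by linarith)
    have e3 : (1 - r) ^ (r * (n:ℝ) - k) * (1 - r) ^ ((1 - r) * (n:ℝ))
        = (1 - r) ^ ((n:ℝ) - k) := by
      rw [← Real.rpow_add hb0]; ring_nf
    calc D = a ^ (k:ℝ) * (a ^ (r * (n:ℝ) - k) * (1 - r) ^ ((1 - r) * (n:ℝ))) := by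
            rw [hDdef, e1]; ring
      _ ≤ a ^ (k:ℝ) * ((1 - r) ^ (r * (n:ℝ) - k) * (1 - r) ^ ((1 - r) * (n:ℝ))) := by
            apply mul_le_mul_of_nonneg_left _ (Real.rpow_nonneg ha0.le _)
            exact mul_le_mul_of_nonneg_right e2 (Real.rpow_nonneg hb0.le _)
      _ = (1 - r) ^ ((n:ℝ) - k) * a ^ (k:ℝ) := by rw [e3]; ring
  -- identify D with d^{-(n H)}
  have hlogpow : ∀ t : ℝ, 0 < t → ∀ e : ℝ, (d:ℝ) ^ (e * Real.logb d t) = t ^ e := by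
    intro t ht e
    rw [mul_comm, Real.rpow_mul hd0.le, Real.rpow_logb hd0 hd1.ne' ht]
  have hD : D = (d:ℝ) ^ (-((n:ℝ) * Hd d r)) := by
    have hexp : -((n:ℝ) * Hd d r)
        = (r * n) * Real.logb d r + ((1 - r) * n) * Real.logb d (1 - r)
          - (r * n) * Real.logb d ((d:ℝ) - 1) := by
      rw [Hd]; push_cast; ring
    rw [hexp, Real.rpow_sub hd0, Real.rpow_add hd0,
      hlogpow r hr0, hlogpow (1 - r) hb0, hlogpow ((d:ℝ) - 1) hdm1,
      hDdef, hadef, Real.div_rpow hr0.le hdm1.le]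
    ring
  have hDpos : 0 < D := by
    rw [hD]; exact Real.rpow_pos_of_pos hd0 _
  -- main counting bound
  have hTbound : (T.card : ℝ) ≤ (d:ℝ) ^ ((n:ℝ) * Hd d r) := by
    have h1 : (T.card : ℝ) * D ≤ 1 := by
      calc (T.card : ℝ) * D = ∑ _z ∈ T, D := by rw [Finset.sum_const, nsmul_eq_mul]
        _ ≤ ∑ z ∈ T, μ z := Finset.sum_le_sum hge
        _ ≤ ∑ z : Fin n → ZMod d, μ z :=
            Finset.sum_le_sum_of_subset_of_nonneg (Finset.subset_univ T)
              (fun z _ _ => hμnonneg z)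
        _ = 1 := hμsum
    rw [hD, Real.rpow_neg hd0.le, ← div_eq_mul_inv] at h1
    have hX : 0 < (d:ℝ) ^ ((n:ℝ) * Hd d r) := Real.rpow_pos_of_pos hd0 _
    exact (div_le_one hX).mp h1
  calc (Nat.card {y : Fin n → ZMod d | |relWeight (sumWith x y) - ω| ≤ δ} : ℝ)
      ≤ (T.card : ℝ) := by exact_mod_cast hcard1 ▸ hcard2
    _ ≤ (d:ℝ) ^ ((n:ℝ) * Hd d r) := hTbound
end
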